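/- arXiv:1709.06675 — 5 statements merged into one kernel-verified Lean document; each statement's English description precedes it below -/
import Mathlib

section
/- Let G be a finite simple bipartite graph with parts V₁ and V₂ in which every vertex has degree at least one, and let w : V → ℝ≥0 be a nonnegative vertex weight function. Then V₁ has minimum weight among all vertex covers of G (i.e., w(V₁) ≤ w(Π) for every vertex cover Π) if and only if the generalized Hall's condition holds: for every subset S ⊆ V₁, w(S) ≤ w(N(S)). -/
/-- `P` is a vertex cover of `G`: every edge has at least one endpoint in `P`. -/
def IsVertexCover {V : Type*} (G : SimpleGraph V) (P : Finset V) : Prop :=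
  ∀ u v, G.Adj u v → u ∈ P ∨ v ∈ P

/-- The neighborhood `N(S)` of a set of vertices: all vertices adjacent to some vertex of `S`. -/
def nbhd {V : Type*} [Fintype V] [DecidableEq V] (G : SimpleGraph V) [DecidableRel G.Adj]
    (S : Finset V) : Finset V :=
  S.biUnion (fun v => G.neighborFinset v)

/-- In a finite bipartite graph with parts `V₁`, `V₂`, minimum degree ≥ 1,
and nonnegative vertex weights `w`, the part `V₁` has minimum weight among all vertex
covers iff the generalized Hall's condition holds: `w(S) ≤ w(N(S))` for every `S ⊆ V₁`. -/
theorem monolog_optimal_iff_GHC {V : Type*} [Fintype V] [DecidableEq V]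
    (G : SimpleGraph V) [DecidableRel G.Adj]
    (V₁ V₂ : Finset V)
    (hdisj : Disjoint V₁ V₂) (hunion : V₁ ∪ V₂ = Finset.univ)
    (hbip : ∀ u v, G.Adj u v → (u ∈ V₁ ∧ v ∈ V₂) ∨ (u ∈ V₂ ∧ v ∈ V₁))
    (hdeg : ∀ v, 1 ≤ G.degree v)
    (w : V → ℝ) (hw : ∀ v, 0 ≤ w v) :
    (∀ P : Finset V, IsVertexCover G P → V₁.sum w ≤ P.sum w) ↔
      (∀ S ⊆ V₁, S.sum w ≤ (nbhd G S).sum w) := by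
  constructor
  · intro hmin S hS
    have hNsub : nbhd G S ⊆ V₂ := by
      intro x hx
      simp only [nbhd, Finset.mem_biUnion, SimpleGraph.mem_neighborFinset] at hx
      obtain ⟨v, hvS, hadj⟩ := hx
      rcases hbip v x hadj with ⟨_, h⟩ | ⟨h, _⟩
      · exact h
      · exact absurd h (Finset.disjoint_left.mp hdisj (hS hvS))
    have hcov : IsVertexCover G ((V₁ \ S) ∪ nbhd G S) := by
      intro u v hadj
      rcases hbip u v hadj with ⟨hu, hv⟩ | ⟨hu, hv⟩
      · by_cases hus : u ∈ S
        · right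
          apply Finset.mem_union_right
          simp only [nbhd, Finset.mem_biUnion, SimpleGraph.mem_neighborFinset]
          exact ⟨u, hus, hadj⟩
        · left
          exact Finset.mem_union_left _ (Finset.mem_sdiff.mpr ⟨hu, hus⟩)
      · by_cases hvs : v ∈ S
        · left
          apply Finset.mem_union_right
          simp only [nbhd, Finset.mem_biUnion, SimpleGraph.mem_neighborFinset]
          exact ⟨v, hvs, hadj.symm⟩
        · right
          exact Finset.mem_union_left _ (Finset.mem_sdiff.mpr ⟨hv, hvs⟩)
    have h1 := hmin _ hcov
    have hdisj2 : Disjoint (V₁ \ S) (nbhd G S) :=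
      Finset.disjoint_of_subset_left (Finset.sdiff_subset) (hdisj.mono_right hNsub)
    rw [Finset.sum_union hdisj2] at h1
    have h2 : (V₁ \ S).sum w + S.sum w = V₁.sum w := Finset.sum_sdiff hS
    linarith
  · intro hGHC P hP
    set S := V₁ \ P with hSdef
    have hNsub : nbhd G S ⊆ V₂ ∩ P := by
      intro x hx
      simp only [nbhd, Finset.mem_biUnion, SimpleGraph.mem_neighborFinset] at hx
      obtain ⟨v, hvS, hadj⟩ := hx
      obtain ⟨hv1, hvP⟩ := Finset.mem_sdiff.mp hvS
      have hx2 : x ∈ V₂ := by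
        rcases hbip v x hadj with ⟨_, h⟩ | ⟨h, _⟩
        · exact h
        · exact absurd h (Finset.disjoint_left.mp hdisj hv1)
      have hxP : x ∈ P := by
        rcases hP v x hadj with h | h
        · exact absurd h hvP
        · exact h
      exact Finset.mem_inter.mpr ⟨hx2, hxP⟩
    have key := hGHC S (Finset.sdiff_subset)
    have h2 : (nbhd G S).sum w ≤ (V₂ ∩ P).sum w :=
      Finset.sum_le_sum_of_subset_of_nonneg hNsub (fun i _ _ => hw i)
    have h1 : (V₁ ∩ P).sum w + S.sum w = V₁.sum w := Finset.sum_inter_add_sum_sdiff V₁ P w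
    have h3 : (V₁ ∩ P).sum w + (V₂ ∩ P).sum w = P.sum w := by
      rw [← Finset.sum_union (hdisj.mono Finset.inter_subset_left Finset.inter_subset_left),
        ← Finset.union_inter_distrib_right, hunion, Finset.univ_inter]
    linarith
end

section
/- Let G be a finite simple bipartite graph with parts V₁ and V₂, and let w : V → ℝ≥0 be a nonnegative vertex weight function. If the generalized Hall's condition holds for V₁ (i.e., w(S) ≤ w(N(S)) for every S ⊆ V₁), then every vertex cover Π of G satisfies w(Π) ≥ w(V₁). -/
/-- If the generalized Hall's condition holds for `V₁` (i.e.
`w(S) ≤ w(N(S))` for all `S ⊆ V₁`), then every vertex cover `P` satisfies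
`w(V₁) ≤ w(P)`. -/
theorem GHC_implies_monolog_optimal {V : Type*} [Fintype V] [DecidableEq V]
    (G : SimpleGraph V) [DecidableRel G.Adj]
    (V₁ V₂ : Finset V)
    (hdisj : Disjoint V₁ V₂) (hunion : V₁ ∪ V₂ = Finset.univ)
    (hbip : ∀ u v, G.Adj u v → (u ∈ V₁ ∧ v ∈ V₂) ∨ (u ∈ V₂ ∧ v ∈ V₁))
    (w : V → ℝ) (hw : ∀ v, 0 ≤ w v)
    (hGHC : ∀ S ⊆ V₁, S.sum w ≤ (nbhd G S).sum w) :
    ∀ P : Finset V, IsVertexCover G P → V₁.sum w ≤ P.sum w := by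
  intro P hP
  set S := V₁ \ P with hS
  have hSsub : S ⊆ V₁ := Finset.sdiff_subset
  have hN : nbhd G S ⊆ P ∩ V₂ := by
    intro x hx
    simp only [nbhd, Finset.mem_biUnion, SimpleGraph.mem_neighborFinset] at hx
    obtain ⟨v, hvS, hadj⟩ := hx
    have hvV₁ := hSsub hvS
    have hvP : v ∉ P := (Finset.mem_sdiff.mp hvS).2
    have hxP : x ∈ P := (hP v x hadj).resolve_left hvP
    rcases hbip v x hadj with ⟨_, hx2⟩ | ⟨hv2, _⟩
    · exact Finset.mem_inter.mpr ⟨hxP, hx2⟩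
    · exact absurd hvV₁ (Finset.disjoint_left.mp hdisj.symm hv2)
  have key : S.sum w ≤ (P ∩ V₂).sum w :=
    (hGHC S hSsub).trans (Finset.sum_le_sum_of_subset_of_nonneg hN (fun i _ _ => hw i))
  have hsplit : V₁.sum w = (V₁ ∩ P).sum w + S.sum w := by
    rw [hS, ← Finset.sum_inter_add_sum_sdiff V₁ P w]
  have hPsplit : (V₁ ∩ P).sum w + (P ∩ V₂).sum w ≤ P.sum w := by
    have hdisj2 : Disjoint (V₁ ∩ P) (P ∩ V₂) :=
      (hdisj.mono Finset.inter_subset_left Finset.inter_subset_right)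
    rw [← Finset.sum_union hdisj2]
    apply Finset.sum_le_sum_of_subset_of_nonneg _ (fun i _ _ => hw i)
    exact Finset.union_subset Finset.inter_subset_right Finset.inter_subset_left
  linarith
end

section
/- Let G be a finite simple bipartite graph with parts V₁ and V₂ in which every vertex has degree at least one, let c assign a nonnegative cost c(u,v) ≥ 0 to every edge, and let α₁, α₂ ≥ 0 with α₁ ≥ α₂. Define the vertex weight w_ℓ(v) = α₂ · Σ_{u∼v} c(u,v) for v ∈ V₁ and w_ℓ(v) = α₁ · Σ_{u∼v} c(u,v) for v ∈ V₂. Then V₁ (the part corresponding to the larger coefficient α₁) has minimum weight among all vertex covers of G: w_ℓ(V₁) ≤ w_ℓ(Π) for every vertex cover Π. -/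
open Finset in
/-- With workload weights `w_ℓ(v) = α₂ ∑_{u∼v} c u v` for `v ∈ V₁` and
`w_ℓ(v) = α₁ ∑_{u∼v} c u v` for `v ∈ V₂`, where `α₁ ≥ α₂ ≥ 0`, the part `V₁`
(corresponding to the larger coefficient) has minimum weight among all vertex covers. -/
theorem monolog_optimal_for_workload {V : Type*} [Fintype V] [DecidableEq V]
    (G : SimpleGraph V) [DecidableRel G.Adj]
    (V₁ V₂ : Finset V)
    (hdisj : Disjoint V₁ V₂) (hunion : V₁ ∪ V₂ = Finset.univ)
    (hbip : ∀ u v, G.Adj u v → (u ∈ V₁ ∧ v ∈ V₂) ∨ (u ∈ V₂ ∧ v ∈ V₁))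
    (hdeg : ∀ v, 1 ≤ G.degree v)
    (c : V → V → ℝ)
    (hc : ∀ u v, G.Adj u v → 0 ≤ c u v)
    (hsym : ∀ u v, c u v = c v u)
    (α₁ α₂ : ℝ) (hα₂ : 0 ≤ α₂) (hα : α₂ ≤ α₁)
    (wl : V → ℝ)
    (hwl : ∀ v, wl v =
      if v ∈ V₁ then α₂ * ∑ u ∈ G.neighborFinset v, c u v
      else α₁ * ∑ u ∈ G.neighborFinset v, c u v) :
    ∀ P : Finset V, IsVertexCover G P → V₁.sum wl ≤ P.sum wl := by
  intro P hP
  have hinner : ∀ (β : ℝ) (v : V),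
      (∑ u, if G.Adj v u then β * c u v else 0) = β * ∑ u ∈ G.neighborFinset v, c u v := by
    intro β v
    rw [SimpleGraph.neighborFinset_eq_filter, Finset.sum_filter, Finset.mul_sum]
    simp [mul_ite]
  -- LHS as a double sum
  have hL : V₁.sum wl
      = ∑ v, ∑ u, (if v ∈ V₁ then (if G.Adj v u then α₂ * c u v else 0) else 0) := by
    calc V₁.sum wl = ∑ v, (if v ∈ V₁ then wl v else 0) := by
          rw [Finset.sum_ite_mem, Finset.univ_inter]
      _ = ∑ v, ∑ u, (if v ∈ V₁ then (if G.Adj v u then α₂ * c u v else 0) else 0) := by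
          refine Finset.sum_congr rfl fun v _ => ?_
          by_cases hv : v ∈ V₁
          · rw [if_pos hv, hwl v, if_pos hv, ← hinner]
            exact Finset.sum_congr rfl fun u _ => by rw [if_pos hv]
          · simp [hv]
  -- RHS as a double sum
  have hR : P.sum wl
      = (∑ v, ∑ u, (if v ∈ P ∧ v ∈ V₁ then (if G.Adj v u then α₂ * c u v else 0) else 0))
      + (∑ v, ∑ u, (if v ∈ P ∧ v ∉ V₁ then (if G.Adj v u then α₁ * c u v else 0) else 0)) := by
    rw [← Finset.sum_add_distrib]
    calc P.sum wl = ∑ v, (if v ∈ P then wl v else 0) := by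
          rw [Finset.sum_ite_mem, Finset.univ_inter]
      _ = _ := by
          refine Finset.sum_congr rfl fun v _ => ?_
          by_cases hv : v ∈ P
          · by_cases hv1 : v ∈ V₁
            · rw [if_pos hv, hwl v, if_pos hv1]
              have e1 : (∑ u, (if v ∈ P ∧ v ∈ V₁ then (if G.Adj v u then α₂ * c u v else 0) else 0))
                  = α₂ * ∑ u ∈ G.neighborFinset v, c u v := by
                rw [← hinner α₂ v]
                exact Finset.sum_congr rfl fun u _ => by rw [if_pos ⟨hv, hv1⟩]
              have e2 : (∑ u, (if v ∈ P ∧ v ∉ V₁ then (if G.Adj v u then α₁ * c u v else 0) else 0))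
                  = 0 := by simp [hv1]
              rw [e1, e2, add_zero]
            · rw [if_pos hv, hwl v, if_neg hv1]
              have e1 : (∑ u, (if v ∈ P ∧ v ∈ V₁ then (if G.Adj v u then α₂ * c u v else 0) else 0))
                  = 0 := by simp [hv1]
              have e2 : (∑ u, (if v ∈ P ∧ v ∉ V₁ then (if G.Adj v u then α₁ * c u v else 0) else 0))
                  = α₁ * ∑ u ∈ G.neighborFinset v, c u v := by
                rw [← hinner α₁ v]
                exact Finset.sum_congr rfl fun u _ => by rw [if_pos ⟨hv, hv1⟩]
              rw [e1, e2, zero_add]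
          · simp [hv]
  -- swap indices in the second RHS sum
  have hswap : (∑ v, ∑ u, (if v ∈ P ∧ v ∉ V₁ then (if G.Adj v u then α₁ * c u v else 0) else 0))
      = ∑ v, ∑ u, (if u ∈ P ∧ u ∉ V₁ then (if G.Adj v u then α₁ * c u v else 0) else 0) := by
    rw [Finset.sum_comm]
    refine Finset.sum_congr rfl fun v _ => Finset.sum_congr rfl fun u _ => ?_
    by_cases h : G.Adj v u
    · have h2 : G.Adj u v := h.symm
      simp [h, h2, hsym u v]
    · have h' : ¬ G.Adj u v := fun hh => h hh.symm
      simp [h, h']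
  rw [hL, hR, hswap, ← Finset.sum_add_distrib]
  refine Finset.sum_le_sum fun v _ => ?_
  rw [← Finset.sum_add_distrib]
  refine Finset.sum_le_sum fun u _ => ?_
  by_cases hadj : G.Adj v u
  · have hcn : 0 ≤ c u v := hc u v hadj.symm
    have hx1 : (0:ℝ) ≤ α₁ * c u v := mul_nonneg (hα₂.trans hα) hcn
    have hx2 : (0:ℝ) ≤ α₂ * c u v := mul_nonneg hα₂ hcn
    have hx3 : α₂ * c u v ≤ α₁ * c u v := mul_le_mul_of_nonneg_right hα hcn
    simp only [hadj, if_true]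
    split_ifs with h1 h2 h3 h4
    · linarith
    · linarith
    · -- v ∈ V₁, ¬(v∈P∧v∈V₁), u∈P∧u∉V₁ : α₂c ≤ α₁c
      linarith
    · -- v ∈ V₁, ¬(v∈P∧v∈V₁), ¬(u∈P∧u∉V₁) : contradiction
      exfalso
      have hu2 : u ∉ V₁ := by
        intro hu1
        rcases hbip v u hadj with ⟨_, hu⟩ | ⟨hv2, _⟩
        · exact Finset.disjoint_left.mp hdisj hu1 hu
        · exact Finset.disjoint_left.mp hdisj h1 hv2
      rcases hP v u hadj with hvP | huP
      · exact h2 ⟨hvP, h1⟩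
      · exact h4 ⟨huP, hu2⟩
    all_goals linarith
  · simp [hadj]
end

section
/- Let G be a finite simple bipartite graph with parts V₁ and V₂, and let w : V → ℝ≥0 be a nonnegative vertex weight function. Then the linear-programming relaxation of the minimum-weight vertex cover problem is tight: the minimum of Σ_{v∈V} w(v)·x(v) over all fractional covers x : V → ℝ (i.e., x(v) ≥ 0 for all v and x(u) + x(v) ≥ 1 for every edge {u,v}) is attained by some x taking values only in {0,1}; equivalently, this minimum equals the minimum weight w(Π) over all (integral) vertex covers Π of G. -/
/-- `x : V → ℝ` is a fractional cover of `G`: `x ≥ 0` and `x u + x v ≥ 1` on edges. -/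
def IsFracCover {V : Type*} (G : SimpleGraph V) (x : V → ℝ) : Prop :=
  (∀ v, 0 ≤ x v) ∧ ∀ u v, G.Adj u v → 1 ≤ x u + x v

open Finset

open scoped Classical

/-- The set of "fractional" vertices of `y`. -/
noncomputable def Fset {V : Type*} [Fintype V] (y : V → ℝ) : Finset V :=
  Finset.univ.filter (fun v => y v ≠ 0 ∧ y v ≠ 1)

lemma mem_Fset {V : Type*} [Fintype V] {y : V → ℝ} {v : V} :
    v ∈ Fset y ↔ y v ≠ 0 ∧ y v ≠ 1 := by
  simp [Fset]

lemma step_lemma {V : Type*} [Fintype V] [DecidableEq V]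
    (G : SimpleGraph V) (V₁ V₂ : Finset V)
    (hdisj : Disjoint V₁ V₂) (hunion : V₁ ∪ V₂ = Finset.univ)
    (hbip : ∀ u v, G.Adj u v → (u ∈ V₁ ∧ v ∈ V₂) ∨ (u ∈ V₂ ∧ v ∈ V₁))
    (w y : V → ℝ) (hy : IsFracCover G y) (hle : ∀ v, y v ≤ 1)
    (hne : (Fset y).Nonempty)
    (hcmp : ∑ v ∈ (Fset y).filter (· ∈ V₁), w v ≤ ∑ v ∈ (Fset y).filter (· ∈ V₂), w v) :
    ∃ (y' : V → ℝ) (v₀ : V), IsFracCover G y' ∧ (∀ v, y' v ≤ 1) ∧ v₀ ∈ Fset y ∧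
      Fset y' ⊆ (Fset y).erase v₀ ∧ ∑ v, w v * y' v ≤ ∑ v, w v * y v := by
  obtain ⟨hy0, hyE⟩ := hy
  have hV2 : ∀ v : V, v ∉ V₁ → v ∈ V₂ := by
    intro v hv
    have : v ∈ V₁ ∪ V₂ := hunion ▸ Finset.mem_univ v
    simpa [Finset.mem_union, hv] using this
  have hV1 : ∀ v : V, v ∈ V₂ → v ∉ V₁ := fun v h2 h1 =>
    (Finset.disjoint_left.mp hdisj h1) h2
  set g : V → ℝ := fun v => if v ∈ V₁ then 1 - y v else y v with hg
  obtain ⟨v₀, hv₀F, hv₀min⟩ := Finset.exists_min_image (Fset y) g hne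
  set ε := g v₀ with hε
  have hεpos : 0 < ε := by
    rcases mem_Fset.1 hv₀F with ⟨h0, h1⟩
    by_cases hv : v₀ ∈ V₁
    · have : y v₀ < 1 := lt_of_le_of_ne (hle v₀) h1
      simp only [hε, hg, if_pos hv]
      linarith
    · simp only [hε, hg, if_neg hv]
      exact lt_of_le_of_ne (hy0 v₀) (Ne.symm h0)
  set y' : V → ℝ := fun v => if v ∈ Fset y then (if v ∈ V₁ then y v + ε else y v - ε) else y v
    with hy'
  -- basic bounds on ε on fractional vertices
  have hεle1 : ∀ v ∈ Fset y, v ∈ V₁ → ε ≤ 1 - y v := by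
    intro v hv h1
    have := hv₀min v hv
    simpa [hg, if_pos h1] using this
  have hεle2 : ∀ v ∈ Fset y, v ∉ V₁ → ε ≤ y v := by
    intro v hv h1
    have := hv₀min v hv
    simpa [hg, if_neg h1] using this
  have hval1 : ∀ v ∈ Fset y, v ∈ V₁ → y' v = y v + ε := by
    intro v hv h1; simp [hy', hv, h1]
  have hval2 : ∀ v ∈ Fset y, v ∉ V₁ → y' v = y v - ε := by
    intro v hv h1; simp [hy', hv, h1]
  have hstay : ∀ v, v ∉ Fset y → y' v = y v := by
    intro v hv; simp [hy', hv]
  have h01 : ∀ v, v ∉ Fset y → y v = 0 ∨ y v = 1 := by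
    intro v hv
    by_contra h
    push_neg at h
    exact hv (mem_Fset.2 ⟨h.1, h.2⟩)
  -- y' is nonnegative and ≤ 1
  have hy'0 : ∀ v, 0 ≤ y' v := by
    intro v
    by_cases hv : v ∈ Fset y
    · by_cases h1 : v ∈ V₁
      · rw [hval1 v hv h1]; have := hy0 v; linarith
      · rw [hval2 v hv h1]; have := hεle2 v hv h1; linarith
    · rw [hstay v hv]; exact hy0 v
  have hy'le : ∀ v, y' v ≤ 1 := by
    intro v
    by_cases hv : v ∈ Fset y
    · by_cases h1 : v ∈ V₁
      · rw [hval1 v hv h1]; have := hεle1 v hv h1; linarith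
      · rw [hval2 v hv h1]; have := hle v; linarith
    · rw [hstay v hv]; exact hle v
  -- edge constraints
  have hedge : ∀ u v, u ∈ V₁ → v ∈ V₂ → G.Adj u v → 1 ≤ y' u + y' v := by
    intro u v hu1 hv2 huv
    have hsum := hyE u v huv
    have hv1 : v ∉ V₁ := hV1 v hv2
    by_cases hu : u ∈ Fset y <;> by_cases hv : v ∈ Fset y
    · rw [hval1 u hu hu1, hval2 v hv hv1]; linarith
    · rw [hval1 u hu hu1, hstay v hv]; linarith
    · rw [hstay u hu, hval2 v hv hv1]
      rcases h01 u hu with h | h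
      · exfalso
        have : y v ≠ 1 := (mem_Fset.1 hv).2
        have : y v < 1 := lt_of_le_of_ne (hle v) this
        rw [h] at hsum; linarith
      · have := hεle2 v hv hv1; rw [h]; linarith
    · rw [hstay u hu, hstay v hv]; exact hsum
  have hy'cov : IsFracCover G y' := by
    refine ⟨hy'0, fun u v huv => ?_⟩
    rcases hbip u v huv with ⟨hu, hv⟩ | ⟨hu, hv⟩
    · exact hedge u v hu hv huv
    · rw [add_comm]; exact hedge v u hv hu huv.symm
  -- Fset shrinks: v₀ becomes integral
  have hv₀int : y' v₀ = 0 ∨ y' v₀ = 1 := by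
    by_cases h1 : v₀ ∈ V₁
    · right
      rw [hval1 v₀ hv₀F h1]
      simp only [hε, hg, if_pos h1]; ring
    · left
      rw [hval2 v₀ hv₀F h1]
      simp only [hε, hg, if_neg h1]; ring
  have hsub : Fset y' ⊆ (Fset y).erase v₀ := by
    intro v hv
    rcases mem_Fset.1 hv with ⟨h0, h1⟩
    have hvF : v ∈ Fset y := by
      by_contra hc
      rcases h01 v hc with h | h <;> rw [hstay v hc] at h0 h1 <;> [exact h0 h; exact h1 h]
    refine Finset.mem_erase.2 ⟨?_, hvF⟩
    intro hvv
    subst hvv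
    rcases hv₀int with h | h <;> [exact h0 h; exact h1 h]
  -- objective does not increase
  have hobj : ∑ v, w v * y' v ≤ ∑ v, w v * y v := by
    have hdiff : ∀ v, w v * y' v - w v * y v =
        if v ∈ Fset y then (if v ∈ V₁ then w v * ε else -(w v * ε)) else 0 := by
      intro v
      by_cases hv : v ∈ Fset y
      · by_cases h1 : v ∈ V₁
        · rw [hval1 v hv h1, if_pos hv, if_pos h1]; ring
        · rw [hval2 v hv h1, if_pos hv, if_neg h1]; ring
      · rw [hstay v hv, if_neg hv]; ring
    have hsumdiff : ∑ v, (w v * y' v - w v * y v) =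
        ε * (∑ v ∈ (Fset y).filter (· ∈ V₁), w v) -
        ε * (∑ v ∈ (Fset y).filter (· ∈ V₂), w v) := by
      rw [Finset.sum_congr rfl fun v _ => hdiff v]
      rw [Finset.sum_ite_mem, Finset.univ_inter, Finset.sum_ite]
      have hfeq : (Fset y).filter (fun v => ¬ v ∈ V₁) = (Fset y).filter (· ∈ V₂) := by
        apply Finset.filter_congr
        intro v _
        constructor
        · intro h; exact hV2 v h
        · intro h; exact hV1 v h
      rw [hfeq, Finset.sum_neg_distrib, Finset.mul_sum, Finset.mul_sum]
      congr 1
      · exact Finset.sum_congr rfl fun v _ => mul_comm _ _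
      · congr 1; exact Finset.sum_congr rfl fun v _ => mul_comm _ _
    have hkey : ∑ v, (w v * y' v - w v * y v) ≤ 0 := by
      rw [hsumdiff]
      have := mul_le_mul_of_nonneg_left hcmp hεpos.le
      linarith
    rw [Finset.sum_sub_distrib] at hkey
    linarith
  exact ⟨y', v₀, hy'cov, hy'le, hv₀F, hsub, hobj⟩

lemma exists_cover_aux {V : Type*} [Fintype V] [DecidableEq V]
    (G : SimpleGraph V) (V₁ V₂ : Finset V)
    (hdisj : Disjoint V₁ V₂) (hunion : V₁ ∪ V₂ = Finset.univ)
    (hbip : ∀ u v, G.Adj u v → (u ∈ V₁ ∧ v ∈ V₂) ∨ (u ∈ V₂ ∧ v ∈ V₁))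
    (w : V → ℝ) :
    ∀ n (y : V → ℝ), IsFracCover G y → (∀ v, y v ≤ 1) → (Fset y).card ≤ n →
      ∃ P : Finset V, IsVertexCover G P ∧ P.sum w ≤ ∑ v, w v * y v := by
  intro n
  induction n with
  | zero =>
    intro y hy hle hcard
    have hF : Fset y = ∅ := Finset.card_eq_zero.mp (le_antisymm hcard (Nat.zero_le _))
    have h01 : ∀ v, y v = 0 ∨ y v = 1 := by
      intro v
      by_contra h
      push_neg at h
      have : v ∈ Fset y := mem_Fset.2 ⟨h.1, h.2⟩
      simp [hF] at this
    refine ⟨Finset.univ.filter (fun v => y v = 1), ?_, ?_⟩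
    · intro u v huv
      have hsum := hy.2 u v huv
      rcases h01 u with h | h
      · right
        rcases h01 v with h' | h'
        · rw [h, h'] at hsum; norm_num at hsum
        · simp [Finset.mem_filter, h']
      · left; simp [Finset.mem_filter, h]
    · rw [Finset.sum_filter]
      apply le_of_eq
      apply Finset.sum_congr rfl
      intro v _
      rcases h01 v with h | h <;> simp [h]
  | succ n ih =>
    intro y hy hle hcard
    by_cases h : (Fset y).card ≤ n
    · exact ih y hy hle h
    have hne : (Fset y).Nonempty := by
      rw [Finset.nonempty_iff_ne_empty]
      intro he
      rw [he] at h
      simp at h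
    rcases le_total (∑ v ∈ (Fset y).filter (· ∈ V₁), w v)
        (∑ v ∈ (Fset y).filter (· ∈ V₂), w v) with hc | hc
    · obtain ⟨y', v₀, hy', hle', hv₀, hsub, hobj⟩ :=
        step_lemma G V₁ V₂ hdisj hunion hbip w y hy hle hne hc
      have hcard' : (Fset y').card ≤ n := by
        have h1 := Finset.card_le_card hsub
        have h2 := Finset.card_erase_of_mem hv₀
        omega
      obtain ⟨P, hP, hPle⟩ := ih y' hy' hle' hcard'
      exact ⟨P, hP, hPle.trans hobj⟩
    · obtain ⟨y', v₀, hy', hle', hv₀, hsub, hobj⟩ :=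
        step_lemma G V₂ V₁ hdisj.symm (by rw [Finset.union_comm]; exact hunion)
          (fun u v h => (hbip u v h).symm) w y hy hle hne hc
      have hcard' : (Fset y').card ≤ n := by
        have h1 := Finset.card_le_card hsub
        have h2 := Finset.card_erase_of_mem hv₀
        omega
      obtain ⟨P, hP, hPle⟩ := ih y' hy' hle' hcard'
      exact ⟨P, hP, hPle.trans hobj⟩

lemma exists_cover_le {V : Type*} [Fintype V] [DecidableEq V]
    (G : SimpleGraph V) (V₁ V₂ : Finset V)
    (hdisj : Disjoint V₁ V₂) (hunion : V₁ ∪ V₂ = Finset.univ)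
    (hbip : ∀ u v, G.Adj u v → (u ∈ V₁ ∧ v ∈ V₂) ∨ (u ∈ V₂ ∧ v ∈ V₁))
    (w : V → ℝ) (hw : ∀ v, 0 ≤ w v)
    (y : V → ℝ) (hy : IsFracCover G y) :
    ∃ P : Finset V, IsVertexCover G P ∧ P.sum w ≤ ∑ v, w v * y v := by
  set z : V → ℝ := fun v => min (y v) 1 with hz
  have hzcov : IsFracCover G z := by
    refine ⟨fun v => le_min (hy.1 v) zero_le_one, fun u v huv => ?_⟩
    have hsum := hy.2 u v huv
    by_cases h1 : 1 ≤ y u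
    · have : z u = 1 := min_eq_right h1
      have h0 : 0 ≤ z v := le_min (hy.1 v) zero_le_one
      rw [this]; linarith
    by_cases h2 : 1 ≤ y v
    · have : z v = 1 := min_eq_right h2
      have h0 : 0 ≤ z u := le_min (hy.1 u) zero_le_one
      rw [this]; linarith
    push_neg at h1 h2
    have e1 : z u = y u := min_eq_left h1.le
    have e2 : z v = y v := min_eq_left h2.le
    rw [e1, e2]; exact hsum
  have hzle : ∀ v, z v ≤ 1 := fun v => min_le_right _ _
  obtain ⟨P, hP, hPle⟩ := exists_cover_aux G V₁ V₂ hdisj hunion hbip w (Fintype.card V) z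
    hzcov hzle (by simpa using Finset.card_le_univ (Fset z))
  refine ⟨P, hP, hPle.trans ?_⟩
  apply Finset.sum_le_sum
  intro v _
  exact mul_le_mul_of_nonneg_left (min_le_left _ _) (hw v)

open Finset in
/-- For a finite bipartite graph with nonnegative vertex weights, the LP
relaxation of minimum-weight vertex cover is tight: the minimum of `∑ v, w v * x v`
over fractional covers `x` is attained by some `x` taking values in `{0,1}`;
equivalently, this minimum equals the minimum weight of an integral vertex cover. -/
theorem bipartite_vc_LP_tight {V : Type*} [Fintype V] [DecidableEq V]
    (G : SimpleGraph V) [DecidableRel G.Adj]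
    (V₁ V₂ : Finset V)
    (hdisj : Disjoint V₁ V₂) (hunion : V₁ ∪ V₂ = Finset.univ)
    (hbip : ∀ u v, G.Adj u v → (u ∈ V₁ ∧ v ∈ V₂) ∨ (u ∈ V₂ ∧ v ∈ V₁))
    (w : V → ℝ) (hw : ∀ v, 0 ≤ w v) :
    ∃ x : V → ℝ, IsFracCover G x ∧ (∀ v, x v = 0 ∨ x v = 1) ∧
      (∀ y : V → ℝ, IsFracCover G y → ∑ v, w v * x v ≤ ∑ v, w v * y v) ∧
      ∃ P : Finset V, IsVertexCover G P ∧ (∑ v, w v * x v) = P.sum w ∧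
        ∀ Q : Finset V, IsVertexCover G Q → P.sum w ≤ Q.sum w := by
  have hUcov : IsVertexCover G Finset.univ := fun u v _ => Or.inl (Finset.mem_univ u)
  obtain ⟨P₀, hP₀mem, hP₀min⟩ := Finset.exists_min_image
    (Finset.univ.powerset.filter (fun P => IsVertexCover G P)) (fun P => P.sum w)
    ⟨Finset.univ, by simp [hUcov]⟩
  have hP₀cov : IsVertexCover G P₀ := (Finset.mem_filter.mp hP₀mem).2
  have hmin : ∀ Q : Finset V, IsVertexCover G Q → P₀.sum w ≤ Q.sum w := fun Q hQ =>
    hP₀min Q (Finset.mem_filter.mpr ⟨Finset.mem_powerset.mpr (Finset.subset_univ Q), hQ⟩)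
  set x : V → ℝ := fun v => if v ∈ P₀ then 1 else 0 with hx
  have hxsum : ∑ v, w v * x v = P₀.sum w := by
    have h : ∀ v, w v * x v = if v ∈ P₀ then w v else 0 := by
      intro v; simp only [hx]; split <;> ring
    rw [Finset.sum_congr rfl fun v _ => h v, Finset.sum_ite_mem, Finset.univ_inter]
  have hxcov : IsFracCover G x := by
    constructor
    · intro v; simp only [hx]; split <;> norm_num
    · intro u v huv
      have h0u : (0:ℝ) ≤ x u := by simp only [hx]; split <;> norm_num
      have h0v : (0:ℝ) ≤ x v := by simp only [hx]; split <;> norm_num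
      rcases hP₀cov u v huv with h | h
      · have : x u = 1 := by simp [hx, h]
        linarith
      · have : x v = 1 := by simp [hx, h]
        linarith
  refine ⟨x, hxcov, ?_, ?_, P₀, hP₀cov, hxsum, hmin⟩
  · intro v; simp only [hx]; split <;> [right; left] <;> rfl
  · intro y hy
    obtain ⟨P, hP, hPle⟩ := exists_cover_le G V₁ V₂ hdisj hunion hbip w hw y hy
    rw [hxsum]
    exact (hmin P hP).trans hPle
end

section
/- Let G be a finite simple bipartite graph with parts V₁ and V₂, let w : V → ℝ≥0 be a nonnegative weight function satisfying the generalized Hall's condition for V₁ (w(S) ≤ w(N(S)) for all S ⊆ V₁), and let Π be any vertex cover of G. Then w(V₁ \ Π) ≤ w(Π ∩ V₂), and consequently w(Π) = w(Π ∩ V₁) + w(Π ∩ V₂) ≥ w(Π ∩ V₁) + w(V₁ \ Π) = w(V₁). -/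
/-- Under the generalized Hall's condition for `V₁`, for any vertex cover
`P` one has `w(V₁ \ P) ≤ w(P ∩ V₂)`, and consequently
`w(P) = w(P ∩ V₁) + w(P ∩ V₂) ≥ w(P ∩ V₁) + w(V₁ \ P) = w(V₁)`. -/
theorem GHC_sufficiency_chain {V : Type*} [Fintype V] [DecidableEq V]
    (G : SimpleGraph V) [DecidableRel G.Adj]
    (V₁ V₂ : Finset V)
    (hdisj : Disjoint V₁ V₂) (hunion : V₁ ∪ V₂ = Finset.univ)
    (hbip : ∀ u v, G.Adj u v → (u ∈ V₁ ∧ v ∈ V₂) ∨ (u ∈ V₂ ∧ v ∈ V₁))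
    (w : V → ℝ) (hw : ∀ v, 0 ≤ w v)
    (hGHC : ∀ S ⊆ V₁, S.sum w ≤ (nbhd G S).sum w)
    (P : Finset V) (hP : IsVertexCover G P) :
    (V₁ \ P).sum w ≤ (P ∩ V₂).sum w ∧
      P.sum w = (P ∩ V₁).sum w + (P ∩ V₂).sum w ∧
      (P ∩ V₁).sum w + (V₁ \ P).sum w = V₁.sum w ∧
      V₁.sum w ≤ P.sum w := by
  have hsub : nbhd G (V₁ \ P) ⊆ P ∩ V₂ := by
    intro v hv
    simp only [nbhd, Finset.mem_biUnion, SimpleGraph.mem_neighborFinset] at hv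
    obtain ⟨u, hu, hadj⟩ := hv
    rw [Finset.mem_sdiff] at hu
    have hvP : v ∈ P := (hP u v hadj).resolve_left hu.2
    have hvV₂ : v ∈ V₂ := by
      rcases hbip u v hadj with ⟨_, h⟩ | ⟨h, _⟩
      · exact h
      · exact absurd hu.1 (Finset.disjoint_right.mp hdisj h)
    exact Finset.mem_inter.mpr ⟨hvP, hvV₂⟩
  have h1 : (V₁ \ P).sum w ≤ (P ∩ V₂).sum w :=
    (hGHC _ (Finset.sdiff_subset)).trans
      (Finset.sum_le_sum_of_subset_of_nonneg hsub (fun v _ _ => hw v))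
  have h2 : P.sum w = (P ∩ V₁).sum w + (P ∩ V₂).sum w := by
    rw [← Finset.sum_union (Finset.disjoint_left.mpr
      (fun a ha hb => Finset.disjoint_left.mp hdisj (Finset.mem_inter.mp ha).2
        (Finset.mem_inter.mp hb).2))]
    congr 1
    rw [← Finset.inter_union_distrib_left, hunion, Finset.inter_univ]
  have h3 : (P ∩ V₁).sum w + (V₁ \ P).sum w = V₁.sum w := by
    rw [← Finset.sum_union (Finset.disjoint_left.mpr
      (fun a ha hb => (Finset.mem_sdiff.mp hb).2 (Finset.mem_inter.mp ha).1))]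
    congr 1
    ext x
    simp only [Finset.mem_union, Finset.mem_inter, Finset.mem_sdiff]
    tauto
  refine ⟨h1, h2, h3, ?_⟩
  rw [h2, ← h3]
  linarith
end
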